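/- Let τ₀ be a densely defined accretive continuous closed form on L₂(m) whose associated semigroup S is positive and L_∞-contractive (equivalently, u ∈ D(τ₀) implies u∧1 ∈ D(τ₀) and τ₀(u∧1, (u−1)⁺) ≥ 0). Let j ≥ 0 be measurable and τ = τ₀ + τ_j. Then for u ∈ D(τ), u∧1 ∈ D(τ) and τ(u∧1, (u−1)⁺) ≥ 0; hence the semigroup T associated to τ is positive and L_∞-contractive. -/

import Mathlib

open MeasureTheory Set
open scoped ENNReal

lemma min_sq_le (a b : ℝ) : (min a 1 - min b 1) ^ 2 ≤ (a - b) ^ 2 := by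
  rcases le_total a 1 with ha | ha <;> rcases le_total b 1 with hb | hb <;>
    simp [min_eq_left, min_eq_right, ha, hb] <;> nlinarith

lemma min_max_mul_nonneg (a b : ℝ) :
    0 ≤ (min a 1 - min b 1) * (max (a - 1) 0 - max (b - 1) 0) := by
  rcases le_total a 1 with ha | ha <;> rcases le_total b 1 with hb | hb <;>
    simp [min_eq_left, min_eq_right, max_eq_right, max_eq_left, sub_nonpos.mpr,
      sub_nonneg.mpr, ha, hb] <;> nlinarith

/-- If `τ₀` satisfies the Ouhabaz criterion for positivity and `L_∞`-contractivity
(`u ∈ D(τ₀)` implies `u∧1 ∈ D(τ₀)` and `τ₀(u∧1,(u−1)⁺) ≥ 0`), then so does the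
perturbed form `τ = τ₀ + τ_j`. -/
theorem perturbed_form_Linfty_contractivity_criterion
    {Ω : Type*} [MeasurableSpace Ω] (μ : Measure Ω)
    (D₀ : Set (Ω → ℝ)) (τ₀ : (Ω → ℝ) → (Ω → ℝ) → ℝ)
    (hD₀L2 : ∀ u ∈ D₀, MemLp u 2 μ)
    (hcontr : ∀ u ∈ D₀, (fun x => min (u x) 1) ∈ D₀ ∧
      0 ≤ τ₀ (fun x => min (u x) 1) (fun x => max (u x - 1) 0))
    (j : Ω × Ω → ℝ) (hjm : Measurable j) (hj0 : ∀ z, 0 ≤ j z) :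
    ∀ u : Ω → ℝ, u ∈ D₀ →
      (∫⁻ z : Ω × Ω,
        ENNReal.ofReal ((u z.1 - u z.2) ^ 2 * j z) ∂(μ.prod μ)) < ⊤ →
      ((fun x => min (u x) 1) ∈ D₀ ∧
        (∫⁻ z : Ω × Ω,
          ENNReal.ofReal ((min (u z.1) 1 - min (u z.2) 1) ^ 2 * j z)
          ∂(μ.prod μ)) < ⊤ ∧
        0 ≤ τ₀ (fun x => min (u x) 1) (fun x => max (u x - 1) 0) +
          ∫ z : Ω × Ω,
            (min (u z.1) 1 - min (u z.2) 1) * (max (u z.1 - 1) 0 - max (u z.2 - 1) 0) * j z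
            ∂(μ.prod μ)) := by
  intro u hu hfin
  obtain ⟨hmem, hτ⟩ := hcontr u hu
  refine ⟨hmem, ?_, ?_⟩
  · refine lt_of_le_of_lt (lintegral_mono fun z => ?_) hfin
    exact ENNReal.ofReal_le_ofReal
      (mul_le_mul_of_nonneg_right (min_sq_le _ _) (hj0 z))
  · have hint : 0 ≤ ∫ z : Ω × Ω,
        (min (u z.1) 1 - min (u z.2) 1) * (max (u z.1 - 1) 0 - max (u z.2 - 1) 0) * j z
        ∂(μ.prod μ) :=
      integral_nonneg fun z => mul_nonneg (min_max_mul_nonneg _ _) (hj0 z)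
    linarith
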